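/- Consider a random bipartite graph G(W,Z;E) with |W| = w ≤ cz for constant 0 < c < 1, where each i ∈ W is independently connected to a uniformly random set of d_i ≥ 1 + β log z distinct nodes of Z (β > 0). Then with probability at least 1 − O(z^{−β log(1/c)}), the graph has a W-saturating perfect matching. -/

import Mathlib

open Finset

private lemma rpm_descFactorial_le (m z : ℕ) (h : m ≤ z) (k : ℕ) :
    m.descFactorial k * z ^ k ≤ z.descFactorial k * m ^ k := by
  induction k with
  | zero => simp
  | succ k ih =>
    rw [Nat.descFactorial_succ, Nat.descFactorial_succ, pow_succ, pow_succ]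
    have h1 : (m - k) * z ≤ (z - k) * m := by
      rcases le_or_gt k m with hk | hk
      · have h2 : k * m ≤ k * z := Nat.mul_le_mul_left k h
        have h3 : m * z = z * m := Nat.mul_comm m z
        rw [Nat.sub_mul, Nat.sub_mul]
        omega
      · rw [Nat.sub_eq_zero_of_le hk.le]; simp
    calc (m - k) * m.descFactorial k * (z ^ k * z)
        = ((m - k) * z) * (m.descFactorial k * z ^ k) := by ring
      _ ≤ ((z - k) * m) * (z.descFactorial k * m ^ k) := Nat.mul_le_mul h1 ih
      _ = (z - k) * z.descFactorial k * (m ^ k * m) := by ring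

private lemma rpm_choose_ratio (m z k : ℕ) (hmz : m ≤ z) (hz : 0 < z) :
    (m.choose k : ℝ) ≤ ((m : ℝ) / z) ^ k * z.choose k := by
  have hnat : m.choose k * z ^ k ≤ z.choose k * m ^ k := by
    have h := rpm_descFactorial_le m z hmz k
    rw [Nat.descFactorial_eq_factorial_mul_choose, Nat.descFactorial_eq_factorial_mul_choose] at h
    apply Nat.le_of_mul_le_mul_left _ (Nat.factorial_pos k)
    calc (Nat.factorial k) * (m.choose k * z ^ k)
        = (Nat.factorial k) * m.choose k * z ^ k := by ring
      _ ≤ (Nat.factorial k) * z.choose k * m ^ k := h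
      _ = (Nat.factorial k) * (z.choose k * m ^ k) := by ring
  have hzr : (0 : ℝ) < z := by exact_mod_cast hz
  have hcast : (m.choose k : ℝ) * z ^ k ≤ (z.choose k : ℝ) * m ^ k := by exact_mod_cast hnat
  rw [div_pow, div_mul_eq_mul_div, le_div_iff₀ (by positivity)]
  nlinarith [hcast]

private lemma rpm_choose_mul_factorial_le (n k : ℕ) :
    (n.choose k : ℝ) * (Nat.factorial k) ≤ (n : ℝ) ^ k := by
  have h : (Nat.factorial k) * n.choose k ≤ n ^ k := by
    rw [← Nat.descFactorial_eq_factorial_mul_choose]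
    exact Nat.descFactorial_le_pow n k
  calc (n.choose k : ℝ) * (Nat.factorial k)
      = (((Nat.factorial k) * n.choose k : ℕ) : ℝ) := by push_cast; ring
    _ ≤ ((n ^ k : ℕ) : ℝ) := by exact_mod_cast h
    _ = (n : ℝ) ^ k := by push_cast; ring

private lemma rpm_pow_self_le (k : ℕ) : (k : ℝ) ^ k ≤ Real.exp 1 ^ k * (Nat.factorial k) := by
  induction k with
  | zero => simp
  | succ k ih =>
    rcases Nat.eq_zero_or_pos k with rfl | hk
    · norm_num
    · have hk0 : (0 : ℝ) < k := by exact_mod_cast hk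
      have key : ((k : ℝ) + 1) ^ k ≤ Real.exp 1 * (k : ℝ) ^ k := by
        have h1 : 1 + 1 / (k : ℝ) ≤ Real.exp (1 / k) := by
          have := Real.add_one_le_exp (1 / (k : ℝ)); linarith
        have h2 : ((k : ℝ) + 1) = (1 + 1 / k) * k := by field_simp
        rw [h2, mul_pow]
        have h3 : (1 + 1 / (k : ℝ)) ^ k ≤ Real.exp (1 / k) ^ k :=
          pow_le_pow_left₀ (by positivity) h1 k
        have h4 : Real.exp (1 / (k : ℝ)) ^ k = Real.exp 1 := by
          rw [← Real.exp_nat_mul]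
          congr 1
          field_simp
        rw [← h4]
        exact mul_le_mul_of_nonneg_right h3 (by positivity)
      have hfs : ((Nat.factorial (k+1)) : ℝ) = ((k : ℝ) + 1) * (Nat.factorial k) := by
        rw [Nat.factorial_succ]; push_cast; ring
      have hmain : ((k : ℝ) + 1) ^ (k + 1) ≤ Real.exp 1 ^ (k + 1) * ((Nat.factorial (k+1)) : ℝ) := by
        rw [hfs]
        calc ((k : ℝ) + 1) ^ (k + 1) = ((k : ℝ) + 1) * ((k : ℝ) + 1) ^ k := by ring
          _ ≤ ((k : ℝ) + 1) * (Real.exp 1 * (k : ℝ) ^ k) :=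
              mul_le_mul_of_nonneg_left key (by positivity)
          _ ≤ ((k : ℝ) + 1) * (Real.exp 1 * (Real.exp 1 ^ k * (Nat.factorial k))) := by
              have h5 := mul_le_mul_of_nonneg_left ih (le_of_lt (Real.exp_pos 1))
              have h6 : (0:ℝ) ≤ (k:ℝ)+1 := by positivity
              nlinarith [h5]
          _ = Real.exp 1 ^ (k + 1) * (((k : ℝ) + 1) * (Nat.factorial k)) := by ring
      have hcast : (((k+1 : ℕ)) : ℝ) = (k : ℝ) + 1 := by push_cast; ring
      rw [hcast]
      exact hmain

private lemma rpm_geom (r : ℝ) (h0 : 0 ≤ r) (h2 : r ≤ 1 / 2) (w : ℕ) :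
    ∑ k ∈ Finset.Icc 1 w, r ^ k ≤ 2 * r := by
  have key : ∀ w : ℕ, ∑ k ∈ Finset.Icc 1 w, r ^ k ≤ r * (2 - 2 * (1 / 2 : ℝ) ^ w) := by
    intro w
    induction w with
    | zero => simp
    | succ w ih =>
      rw [Finset.sum_Icc_succ_top (by omega)]
      have hpow : r ^ (w + 1) ≤ r * (1 / 2 : ℝ) ^ w := by
        calc r ^ (w + 1) = r * r ^ w := by ring
          _ ≤ r * (1 / 2 : ℝ) ^ w :=
              mul_le_mul_of_nonneg_left (pow_le_pow_left₀ h0 h2 w) h0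
      calc (∑ k ∈ Finset.Icc 1 w, r ^ k) + r ^ (w + 1)
          ≤ r * (2 - 2 * (1 / 2 : ℝ) ^ w) + r * (1 / 2 : ℝ) ^ w := by linarith
        _ = r * (2 - 2 * (1 / 2 : ℝ) ^ (w + 1)) := by ring
  calc ∑ k ∈ Finset.Icc 1 w, r ^ k ≤ r * (2 - 2 * (1 / 2 : ℝ) ^ w) := key w
    _ ≤ 2 * r := by nlinarith [pow_nonneg (by norm_num : (0:ℝ) ≤ 1/2) w]

private lemma rpm_count (w z : ℕ) (d : Fin w → ℕ) (S : Finset (Fin w)) (T : Finset (Fin z)) :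
    Fintype.card {ω : ∀ i : Fin w, {U : Finset (Fin z) // U.card = d i} //
        ∀ i ∈ S, ((ω i : Finset (Fin z))) ⊆ T}
      = ∏ i : Fin w, if i ∈ S then T.card.choose (d i) else z.choose (d i) := by
  classical
  rw [Fintype.card_congr (Equiv.subtypePiEquivPi
    (p := fun i (x : {U : Finset (Fin z) // U.card = d i}) => i ∈ S → (x : Finset (Fin z)) ⊆ T))]
  rw [Fintype.card_pi]
  apply Finset.prod_congr rfl
  intro i _
  by_cases hi : i ∈ S
  · simp only [hi, if_true]
    rw [Fintype.card_congr (Equiv.subtypeEquivRight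
      (q := fun x : {U : Finset (Fin z) // U.card = d i} => (x : Finset (Fin z)) ⊆ T)
      (fun x => by simp [hi]))]
    rw [Fintype.card_congr (Equiv.subtypeSubtypeEquivSubtypeInter
      (fun U : Finset (Fin z) => U.card = d i) (fun U => U ⊆ T))]
    rw [Fintype.card_subtype]
    have h : (univ.filter fun U : Finset (Fin z) => U.card = d i ∧ U ⊆ T)
        = T.powersetCard (d i) := by
      ext U; simp [Finset.mem_powersetCard, and_comm]
    rw [h, Finset.card_powersetCard]
  · simp only [hi, if_false]
    rw [Fintype.card_congr (Equiv.subtypeUnivEquiv (fun x (h : False) => h.elim))]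
    simp

private lemma rpm_EF_bound (w z : ℕ) (d : Fin w → ℕ) (hz : 0 < z)
    (δ : ℝ) (hd : ∀ i, δ ≤ d i) (k : ℕ) (hk1 : 1 ≤ k) (hkz : k ≤ z)
    (S : Finset (Fin w)) (T : Finset (Fin z)) (hT : T.card = k) (hS : S.card = k) :
    (Fintype.card {ω : ∀ i : Fin w, {U : Finset (Fin z) // U.card = d i} //
        ∀ i ∈ S, ((ω i : Finset (Fin z))) ⊆ T} : ℝ)
      ≤ (((k : ℝ) / z) ^ δ) ^ k * ∏ i : Fin w, (z.choose (d i) : ℝ) := by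
  have hzr : (0 : ℝ) < z := by exact_mod_cast hz
  have hx0 : (0 : ℝ) < (k : ℝ) / z := by
    apply div_pos _ hzr; exact_mod_cast hk1
  have hx1 : (k : ℝ) / z ≤ 1 := by
    rw [div_le_one hzr]; exact_mod_cast hkz
  rw [rpm_count w z d S T, hT]
  calc ((∏ i : Fin w, if i ∈ S then k.choose (d i) else z.choose (d i) : ℕ) : ℝ)
      = ∏ i : Fin w, (if i ∈ S then (k.choose (d i) : ℝ) else (z.choose (d i) : ℝ)) := by
        push_cast [apply_ite (Nat.cast : ℕ → ℝ)]; ring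
    _ ≤ ∏ i : Fin w, ((if i ∈ S then ((k : ℝ) / z) ^ δ else 1) * (z.choose (d i) : ℝ)) := by
        apply Finset.prod_le_prod
        · intro i _; split_ifs <;> positivity
        · intro i _
          by_cases hi : i ∈ S
          · simp only [hi, if_true]
            calc (k.choose (d i) : ℝ) ≤ ((k : ℝ) / z) ^ (d i) * z.choose (d i) :=
                  rpm_choose_ratio k z (d i) hkz hz
              _ ≤ ((k : ℝ) / z) ^ δ * z.choose (d i) := by
                  apply mul_le_mul_of_nonneg_right _ (by positivity)
                  rw [← Real.rpow_natCast ((k : ℝ) / z) (d i)]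
                  exact Real.rpow_le_rpow_of_exponent_ge hx0 hx1 (hd i)
          · simp [hi]
    _ = (∏ i : Fin w, (if i ∈ S then ((k : ℝ) / z) ^ δ else 1)) *
          ∏ i : Fin w, (z.choose (d i) : ℝ) := Finset.prod_mul_distrib
    _ = (((k : ℝ) / z) ^ δ) ^ k * ∏ i : Fin w, (z.choose (d i) : ℝ) := by
        rw [Finset.prod_ite_mem, Finset.univ_inter, Finset.prod_const, hS]

/-- Existence of a perfect matching for random bipartite graphs: for constants
`0 < c < 1` and `β > 0` there are constants `K > 0` and `C` such that for every random
bipartite graph `G(W,Z;E)` with `|W| = w ≤ c·z`, `z ≥ C`, in which each left vertex `i`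
is independently connected to a uniformly random set of `d i ≥ 1 + β log z` distinct
right vertices, the probability that the graph has a `W`-saturating perfect matching is
at least `1 − K·z^{−β log(1/c)}`. -/
theorem random_perfect_matching_whp (c β : ℝ) (hc0 : 0 < c) (hc1 : c < 1) (hβ : 0 < β) :
    ∃ K C : ℝ, 0 < K ∧ ∀ (w z : ℕ) (d : Fin w → ℕ),
      C ≤ (z : ℝ) → (w : ℝ) ≤ c * z → (∀ i, d i ≤ z) →
      (∀ i, 1 + β * Real.log z ≤ (d i : ℝ)) →
      1 - K * (z : ℝ) ^ (-(β * Real.log (1 / c))) ≤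
        (Nat.card {ω : ∀ i : Fin w, {T : Finset (Fin z) // T.card = d i} //
            ∃ f : Fin w → Fin z, Function.Injective f ∧
              ∀ i, f i ∈ ((ω i : {T : Finset (Fin z) // T.card = d i}) :
                Finset (Fin z))} : ℝ) /
          (Nat.card (∀ i : Fin w, {T : Finset (Fin z) // T.card = d i}) : ℝ) := by
  classical
  refine ⟨2 * Real.exp 1 ^ 2,
    max (max 1 (Real.exp (1 / β))) ((2 * Real.exp 1 ^ 2) ^ ((1 : ℝ) / (β * Real.log (1 / c)))),
    by positivity, ?_⟩
  intro w z d hzC hwz hdz hdlog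
  set α : ℝ := β * Real.log (1 / c) with hα
  have hc1' : (1 : ℝ) < 1 / c := (lt_div_iff₀ hc0).mpr (by linarith)
  have hα0 : 0 < α := mul_pos hβ (Real.log_pos hc1')
  have hz1 : (1 : ℝ) ≤ z := le_trans (le_trans (le_max_left 1 _) (le_max_left _ _)) hzC
  have hz0 : 0 < z := by exact_mod_cast lt_of_lt_of_le zero_lt_one hz1
  have hzr : (0 : ℝ) < z := by exact_mod_cast hz0
  have hlog1 : (1 : ℝ) ≤ β * Real.log z := by
    have h1 : Real.exp (1 / β) ≤ z :=
      le_trans (le_trans (le_max_right 1 _) (le_max_left _ _)) hzC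
    have h2 : 1 / β ≤ Real.log z := by
      rw [← Real.log_exp (1 / β)]
      exact Real.log_le_log (Real.exp_pos _) h1
    calc (1 : ℝ) = β * (1 / β) := by field_simp
      _ ≤ β * Real.log z := mul_le_mul_of_nonneg_left h2 hβ.le
  set δ : ℝ := 1 + β * Real.log z with hδ
  have hδ2 : 2 ≤ δ := by rw [hδ]; linarith
  have hwzlt : w < z := by
    by_contra h
    push_neg at h
    have h' : (z : ℝ) ≤ w := by exact_mod_cast h
    nlinarith
  -- the quantity r
  set r : ℝ := Real.exp 1 ^ 2 * (z : ℝ) ^ (-α) with hr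
  have hzα : (0 : ℝ) < (z : ℝ) ^ (-α) := Real.rpow_pos_of_pos hzr _
  have hr0 : 0 ≤ r := by positivity
  have hrhalf : r ≤ 1 / 2 := by
    have hC3 : (2 * Real.exp 1 ^ 2) ^ ((1 : ℝ) / α) ≤ (z : ℝ) :=
      le_trans (le_max_right _ _) hzC
    have h2e : (0 : ℝ) < 2 * Real.exp 1 ^ 2 := by positivity
    have hzpow : 2 * Real.exp 1 ^ 2 ≤ (z : ℝ) ^ α := by
      calc 2 * Real.exp 1 ^ 2 = ((2 * Real.exp 1 ^ 2) ^ ((1 : ℝ) / α)) ^ α := by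
            rw [← Real.rpow_mul h2e.le, one_div_mul_cancel hα0.ne', Real.rpow_one]
        _ ≤ (z : ℝ) ^ α := Real.rpow_le_rpow (by positivity) hC3 hα0.le
    have hzαpos : (0 : ℝ) < (z : ℝ) ^ α := Real.rpow_pos_of_pos hzr α
    rw [hr, Real.rpow_neg hzr.le]
    calc Real.exp 1 ^ 2 * ((z : ℝ) ^ α)⁻¹
        ≤ Real.exp 1 ^ 2 * (2 * Real.exp 1 ^ 2)⁻¹ := by
          apply mul_le_mul_of_nonneg_left _ (by positivity)
          exact inv_anti₀ h2e hzpow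
      _ = 1 / 2 := by
          have he : Real.exp 1 ≠ 0 := (Real.exp_pos 1).ne'
          field_simp
  -- basic counting setup
  set N : ℕ := ∏ i : Fin w, z.choose (d i) with hN
  have hNpos : 0 < N := Finset.prod_pos fun i _ => Nat.choose_pos (hdz i)
  have hNr : (0 : ℝ) < N := by exact_mod_cast hNpos
  have hcardΩ : Nat.card (∀ i : Fin w, {T : Finset (Fin z) // T.card = d i}) = N := by
    rw [Nat.card_eq_fintype_card, Fintype.card_pi]
    apply Finset.prod_congr rfl
    intro i _
    simp
  -- the bad set
  set B : Finset (∀ i : Fin w, {T : Finset (Fin z) // T.card = d i}) :=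
    univ.filter (fun ω => ¬ ∃ f : Fin w → Fin z, Function.Injective f ∧
      ∀ i, f i ∈ ((ω i : {T : Finset (Fin z) // T.card = d i}) : Finset (Fin z))) with hB
  have hgood : (N : ℝ) - B.card ≤
      (Nat.card {ω : ∀ i : Fin w, {T : Finset (Fin z) // T.card = d i} //
        ∃ f : Fin w → Fin z, Function.Injective f ∧
          ∀ i, f i ∈ ((ω i : {T : Finset (Fin z) // T.card = d i}) :
            Finset (Fin z))} : ℝ) := by
    have hsum : (Nat.card {ω : ∀ i : Fin w, {T : Finset (Fin z) // T.card = d i} //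
        ∃ f : Fin w → Fin z, Function.Injective f ∧
          ∀ i, f i ∈ ((ω i : {T : Finset (Fin z) // T.card = d i}) :
            Finset (Fin z))}) + B.card = N := by
      rw [Nat.card_eq_fintype_card, Fintype.card_subtype, hB,
        Finset.card_filter_add_card_filter_not, Finset.card_univ, Fintype.card_pi]
      apply Finset.prod_congr rfl
      intro i _
      simp
    have := hsum
    push_cast [← this]
    linarith
  -- the union bound
  have hEFsum : (B.card : ℝ) ≤ ∑ k ∈ Finset.Icc 1 w,
      (w.choose k : ℝ) * ((z.choose k : ℝ) *
        ((((k : ℝ) / z) ^ δ) ^ k * ∏ i : Fin w, (z.choose (d i) : ℝ))) := by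
    have hsub : B ⊆ (Finset.Icc 1 w).biUnion fun k =>
        (Finset.powersetCard k (univ : Finset (Fin w))).biUnion fun S =>
          (Finset.powersetCard k (univ : Finset (Fin z))).biUnion fun T =>
            univ.filter (fun ω : ∀ i : Fin w, {U : Finset (Fin z) // U.card = d i} =>
              ∀ i ∈ S, ((ω i : Finset (Fin z))) ⊆ T) := by
      intro ω hω
      rw [hB, Finset.mem_filter] at hω
      have hhall := mt (Finset.all_card_le_biUnion_card_iff_existsInjective'
        (fun i : Fin w => ((ω i : Finset (Fin z))))).mp hω.2
      push_neg at hhall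
      obtain ⟨S, hS⟩ := hhall
      have hS1 : 1 ≤ S.card := by omega
      have hSw : S.card ≤ w := le_trans (Finset.card_le_card (Finset.subset_univ S)) (by simp)
      obtain ⟨T, hT1, hT2, hT3⟩ := Finset.exists_subsuperset_card_eq
        (Finset.subset_univ (S.biUnion fun i => ((ω i : Finset (Fin z)))))
        (le_of_lt hS) (by simp; omega)
      simp only [Finset.mem_biUnion, Finset.mem_Icc, Finset.mem_powersetCard,
        Finset.mem_filter, Finset.mem_univ, true_and]
      exact ⟨S.card, ⟨hS1, hSw⟩, S, ⟨Finset.subset_univ S, rfl⟩, T, ⟨hT2, hT3⟩,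
        fun i hi => le_trans (Finset.subset_biUnion_of_mem (fun i => ((ω i : Finset (Fin z)))) hi) hT1⟩
    have hnat : B.card ≤ ∑ k ∈ Finset.Icc 1 w,
        ∑ S ∈ Finset.powersetCard k (univ : Finset (Fin w)),
          ∑ T ∈ Finset.powersetCard k (univ : Finset (Fin z)),
            (univ.filter (fun ω : ∀ i : Fin w, {U : Finset (Fin z) // U.card = d i} =>
              ∀ i ∈ S, ((ω i : Finset (Fin z))) ⊆ T)).card :=
      le_trans (Finset.card_le_card hsub) <|
        le_trans Finset.card_biUnion_le <|
          Finset.sum_le_sum fun k _ =>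
            le_trans Finset.card_biUnion_le <|
              Finset.sum_le_sum fun S _ => Finset.card_biUnion_le
    calc (B.card : ℝ)
        ≤ ∑ k ∈ Finset.Icc 1 w,
            ∑ S ∈ Finset.powersetCard k (univ : Finset (Fin w)),
              ∑ T ∈ Finset.powersetCard k (univ : Finset (Fin z)),
                ((univ.filter (fun ω : ∀ i : Fin w, {U : Finset (Fin z) // U.card = d i} =>
                  ∀ i ∈ S, ((ω i : Finset (Fin z))) ⊆ T)).card : ℝ) := by
          exact_mod_cast hnat
      _ ≤ ∑ k ∈ Finset.Icc 1 w,
            ∑ S ∈ Finset.powersetCard k (univ : Finset (Fin w)),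
              ∑ T ∈ Finset.powersetCard k (univ : Finset (Fin z)),
                ((((k : ℝ) / z) ^ δ) ^ k * ∏ i : Fin w, (z.choose (d i) : ℝ)) := by
          apply Finset.sum_le_sum
          intro k hk
          rw [Finset.mem_Icc] at hk
          apply Finset.sum_le_sum
          intro S hSmem
          apply Finset.sum_le_sum
          intro T hTmem
          rw [Finset.mem_powersetCard] at hSmem hTmem
          have hkz : k ≤ z := le_trans hk.2 (le_of_lt hwzlt)
          have hEF : (univ.filter (fun ω : ∀ i : Fin w, {U : Finset (Fin z) // U.card = d i} =>
              ∀ i ∈ S, ((ω i : Finset (Fin z))) ⊆ T)).card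
              = Fintype.card {ω : ∀ i : Fin w, {U : Finset (Fin z) // U.card = d i} //
                ∀ i ∈ S, ((ω i : Finset (Fin z))) ⊆ T} := (Fintype.card_subtype _).symm
          rw [hEF]
          exact rpm_EF_bound w z d hz0 δ hdlog k hk.1 hkz S T hTmem.2 hSmem.2
      _ = ∑ k ∈ Finset.Icc 1 w,
            (w.choose k : ℝ) * ((z.choose k : ℝ) *
              ((((k : ℝ) / z) ^ δ) ^ k * ∏ i : Fin w, (z.choose (d i) : ℝ))) := by
          apply Finset.sum_congr rfl
          intro k _
          rw [Finset.sum_const, Finset.card_powersetCard, Finset.card_univ, Fintype.card_fin,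
            nsmul_eq_mul, Finset.sum_const, Finset.card_powersetCard, Finset.card_univ,
            Fintype.card_fin, nsmul_eq_mul]
  -- per-k bound
  have hperk : ∀ k ∈ Finset.Icc 1 w,
      (w.choose k : ℝ) * ((z.choose k : ℝ) * ((((k : ℝ) / z) ^ δ) ^ k)) ≤ r ^ k := by
    intro k hk
    rw [Finset.mem_Icc] at hk
    have hk1 : (1 : ℝ) ≤ k := by exact_mod_cast hk.1
    have hkr0 : (0 : ℝ) < k := by linarith
    have hx0 : (0 : ℝ) < (k : ℝ) / z := div_pos hkr0 hzr
    have hkw : (k : ℝ) ≤ w := by exact_mod_cast hk.2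
    have hxc : (k : ℝ) / z ≤ c := by
      rw [div_le_iff₀ hzr]
      calc (k : ℝ) ≤ w := hkw
        _ ≤ c * z := hwz
    have hxδ0 : (0 : ℝ) < ((k : ℝ) / z) ^ δ := Real.rpow_pos_of_pos hx0 δ
    have hkey : (w.choose k : ℝ) * (z.choose k : ℝ) * (((k : ℝ) ^ 2) ^ k)
        ≤ ((w : ℝ) * z * Real.exp 1 ^ 2) ^ k := by
      have hA := rpm_choose_mul_factorial_le w k
      have hBc := rpm_choose_mul_factorial_le z k
      have hC := rpm_pow_self_le k
      have hC2 : ((k : ℝ) ^ k) ^ 2 ≤ (Real.exp 1 ^ k * (Nat.factorial k)) ^ 2 :=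
        pow_le_pow_left₀ (by positivity) hC 2
      have hAB : (w.choose k : ℝ) * (Nat.factorial k) * ((z.choose k : ℝ) * (Nat.factorial k))
          ≤ (w : ℝ) ^ k * (z : ℝ) ^ k :=
        mul_le_mul hA hBc (by positivity) (by positivity)
      calc (w.choose k : ℝ) * (z.choose k : ℝ) * (((k : ℝ) ^ 2) ^ k)
          = (w.choose k : ℝ) * (z.choose k : ℝ) * (((k : ℝ) ^ k) ^ 2) := by
            rw [← pow_mul, ← pow_mul, mul_comm 2 k]
        _ ≤ (w.choose k : ℝ) * (z.choose k : ℝ) * ((Real.exp 1 ^ k * (Nat.factorial k)) ^ 2) := by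
            apply mul_le_mul_of_nonneg_left hC2 (by positivity)
        _ = ((w.choose k : ℝ) * (Nat.factorial k) * ((z.choose k : ℝ) * (Nat.factorial k))) *
              (Real.exp 1 ^ k) ^ 2 := by ring
        _ ≤ ((w : ℝ) ^ k * (z : ℝ) ^ k) * (Real.exp 1 ^ k) ^ 2 :=
            mul_le_mul_of_nonneg_right hAB (by positivity)
        _ = ((w : ℝ) * z * Real.exp 1 ^ 2) ^ k := by ring
    set b : ℝ := (w : ℝ) * z * Real.exp 1 ^ 2 * ((k : ℝ) / z) ^ δ / (k : ℝ) ^ 2 with hb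
    have hb0 : 0 ≤ b := by positivity
    have hclaimB : (w.choose k : ℝ) * ((z.choose k : ℝ) * ((((k : ℝ) / z) ^ δ) ^ k)) ≤ b ^ k := by
      rw [hb, div_pow, mul_pow, le_div_iff₀ (by positivity)]
      calc (w.choose k : ℝ) * ((z.choose k : ℝ) * (((k : ℝ) / z) ^ δ) ^ k) * ((k : ℝ) ^ 2) ^ k
          = ((w.choose k : ℝ) * (z.choose k : ℝ) * (((k : ℝ) ^ 2) ^ k)) *
              ((((k : ℝ) / z) ^ δ) ^ k) := by ring
        _ ≤ (((w : ℝ) * z * Real.exp 1 ^ 2) ^ k) * ((((k : ℝ) / z) ^ δ) ^ k) :=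
            mul_le_mul_of_nonneg_right hkey (by positivity)
    have hbr : b ≤ r := by
      have hxsplit : ((k : ℝ) / z) ^ δ = ((k : ℝ) / z) ^ (2 : ℝ) * ((k : ℝ) / z) ^ (δ - 2) := by
        rw [← Real.rpow_add hx0]; norm_num
      have hx2 : ((k : ℝ) / z) ^ (2 : ℝ) = ((k : ℝ) / z) ^ (2 : ℕ) := by
        rw [← Real.rpow_natCast ((k : ℝ) / z) 2]; norm_num
      have hbeq : b = (w : ℝ) / z * Real.exp 1 ^ 2 * ((k : ℝ) / z) ^ (δ - 2) := by
        rw [hb, hxsplit, hx2]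
        field_simp
      have h1 : (w : ℝ) / z ≤ c := by
        rw [div_le_iff₀ hzr]; exact hwz
      have h2 : ((k : ℝ) / z) ^ (δ - 2) ≤ c ^ (δ - 2) :=
        Real.rpow_le_rpow hx0.le hxc (by linarith)
      have h3 : b ≤ c * Real.exp 1 ^ 2 * c ^ (δ - 2) := by
        rw [hbeq]
        apply mul_le_mul (mul_le_mul_of_nonneg_right h1 (by positivity)) h2
          (Real.rpow_nonneg hx0.le _) (by positivity)
      have h4 : c * Real.exp 1 ^ 2 * c ^ (δ - 2) = Real.exp 1 ^ 2 * c ^ (δ - 1) := by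
        have : c ^ (δ - 1) = c ^ (1 : ℝ) * c ^ (δ - 2) := by
          rw [← Real.rpow_add hc0]; congr 1; ring
        rw [this, Real.rpow_one]; ring
      have h5 : c ^ (δ - 1) = (z : ℝ) ^ (-α) := by
        have hδ1 : δ - 1 = β * Real.log z := by rw [hδ]; ring
        rw [hδ1, Real.rpow_def_of_pos hc0, Real.rpow_def_of_pos hzr]
        congr 1
        rw [hα, one_div, Real.log_inv]
        ring
      rw [hr]
      calc b ≤ c * Real.exp 1 ^ 2 * c ^ (δ - 2) := h3
        _ = Real.exp 1 ^ 2 * c ^ (δ - 1) := h4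
        _ = Real.exp 1 ^ 2 * (z : ℝ) ^ (-α) := by rw [h5]
    calc (w.choose k : ℝ) * ((z.choose k : ℝ) * ((((k : ℝ) / z) ^ δ) ^ k))
        ≤ b ^ k := hclaimB
      _ ≤ r ^ k := pow_le_pow_left₀ hb0 hbr k
  -- assemble
  have hNprod : (N : ℝ) = ∏ i : Fin w, (z.choose (d i) : ℝ) := by
    rw [hN]; push_cast; rfl
  have hBbound : (B.card : ℝ) ≤ 2 * Real.exp 1 ^ 2 * (z : ℝ) ^ (-α) * N := by
    calc (B.card : ℝ)
        ≤ ∑ k ∈ Finset.Icc 1 w,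
            (w.choose k : ℝ) * ((z.choose k : ℝ) *
              ((((k : ℝ) / z) ^ δ) ^ k * ∏ i : Fin w, (z.choose (d i) : ℝ))) := hEFsum
      _ = ∑ k ∈ Finset.Icc 1 w,
            ((w.choose k : ℝ) * ((z.choose k : ℝ) * ((((k : ℝ) / z) ^ δ) ^ k))) * (N : ℝ) := by
          apply Finset.sum_congr rfl
          intro k _
          rw [hNprod]; ring
      _ ≤ ∑ k ∈ Finset.Icc 1 w, r ^ k * (N : ℝ) := by
          apply Finset.sum_le_sum
          intro k hk
          exact mul_le_mul_of_nonneg_right (hperk k hk) hNr.le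
      _ = (∑ k ∈ Finset.Icc 1 w, r ^ k) * (N : ℝ) := (Finset.sum_mul _ _ _).symm
      _ ≤ 2 * r * (N : ℝ) :=
          mul_le_mul_of_nonneg_right (rpm_geom r hr0 hrhalf w) hNr.le
      _ = 2 * Real.exp 1 ^ 2 * (z : ℝ) ^ (-α) * N := by rw [hr]; ring
  rw [hcardΩ, le_div_iff₀ hNr]
  have hfin : (1 - 2 * Real.exp 1 ^ 2 * (z : ℝ) ^ (-α)) * (N : ℝ) ≤ (N : ℝ) - B.card := by
    nlinarith [hBbound]
  linarith [hgood, hfin]
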